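/- Under the null hypothesis with V = Σ + τ_0* B Bᵀ symmetric positive definite, let λ_1, …, λ_{k_1} be the eigenvalues of Zᵀ V^{-1} Z / n. Then the probability under Y ~ N(0, V) that the score is nonnegative equals the probability that a weighted chi-square variable exceeds its mean: P(S(Y) ≥ 0) = P(Σ_{ℓ=1}^{k_1} λ_ℓ x_ℓ² ≥ Σ_{ℓ=1}^{k_1} λ_ℓ), where x_1, …, x_{k_1} are i.i.d. standard normal. (The quantity α appearing in the null distribution of the p-value.) -/

import Mathlib

open MeasureTheory Matrix ProbabilityTheory Filter
open scoped Classical ENNReal RealInnerProductSpace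

/-- The standard multivariate Gaussian measure `N(0, I_N)` on `ℝ^N`:
the product of `N` i.i.d. standard real Gaussians. -/
noncomputable def stdGaussian (N : ℕ) : Measure (Fin N → ℝ) :=
  Measure.pi fun _ => gaussianReal 0 1

/-- The multivariate Gaussian measure `N(0, V)` on `ℝ^N` for a positive semidefinite
covariance matrix `V`: the pushforward of `N(0, I_N)` under the (unique symmetric psd)
square root of `V`.  (Junk value `0` if `V` is not psd.) -/
noncomputable def gaussian {N : ℕ} (V : Matrix (Fin N) (Fin N) ℝ) : Measure (Fin N → ℝ) :=
  if h : V.PosSemidef then (stdGaussian N).map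
    ((h.1.eigenvectorUnitary : Matrix (Fin N) (Fin N) ℝ) * diagonal (Real.sqrt ∘ h.1.eigenvalues) *
      (star h.1.eigenvectorUnitary : Matrix (Fin N) (Fin N) ℝ)).mulVec else 0

section AuxLemmas

lemma measurable_mulVec {m k : ℕ} (A : Matrix (Fin k) (Fin m) ℝ) :
    Measurable (A.mulVec) := by
  have : Continuous (A.mulVecLin : (Fin m → ℝ) → (Fin k → ℝ)) :=
    LinearMap.continuous_on_pi _
  exact this.measurable

instance (N : ℕ) : IsProbabilityMeasure (stdGaussian N) := by
  unfold _root_.stdGaussian; infer_instance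

lemma stdGaussian_eq_withDensity (m : ℕ) :
    stdGaussian m = (volume : Measure (Fin m → ℝ)).withDensity
      (fun x => ENNReal.ofReal (∏ i, gaussianPDFReal 0 1 (x i))) := by
  refine Measure.pi_eq fun s hs => ?_
  rw [withDensity_apply _ (MeasurableSet.univ_pi hs)]
  have hbox : ∀ x : Fin m → ℝ, (Set.univ.pi s).indicator
      (fun x => ∏ i, gaussianPDFReal 0 1 (x i)) x
      = ∏ i, (s i).indicator (gaussianPDFReal 0 1) (x i) := by
    intro x
    by_cases hx : x ∈ Set.univ.pi s
    · rw [Set.indicator_of_mem hx]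
      refine Finset.prod_congr rfl fun i _ => ?_
      rw [Set.indicator_of_mem (hx i (Set.mem_univ i))]
    · rw [Set.indicator_of_notMem hx]
      obtain ⟨i, hi⟩ : ∃ i, x i ∉ s i := by
        by_contra h; push_neg at h; exact hx (fun i _ => h i)
      rw [eq_comm]
      apply Finset.prod_eq_zero (Finset.mem_univ i)
      rw [Set.indicator_of_notMem hi]
  have hInt : ∀ i : Fin m, Integrable ((s i).indicator (gaussianPDFReal 0 1)) :=
    fun i => (integrable_gaussianPDFReal 0 1).indicator (hs i)
  calc ∫⁻ x in Set.univ.pi s, ENNReal.ofReal (∏ i, gaussianPDFReal 0 1 (x i)) ∂volume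
      = ∫⁻ x : Fin m → ℝ, ENNReal.ofReal (∏ i, (s i).indicator (gaussianPDFReal 0 1) (x i)) ∂volume := by
        rw [← lintegral_indicator (MeasurableSet.univ_pi hs)]
        refine lintegral_congr fun x => ?_
        rw [← hbox x]
        by_cases hx : x ∈ Set.univ.pi s
        · rw [Set.indicator_of_mem hx, Set.indicator_of_mem hx]
        · rw [Set.indicator_of_notMem hx, Set.indicator_of_notMem hx, ENNReal.ofReal_zero]
    _ = ENNReal.ofReal (∫ x : Fin m → ℝ, ∏ i, (s i).indicator (gaussianPDFReal 0 1) (x i)) := by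
        rw [← ofReal_integral_eq_lintegral_ofReal]
        · exact Integrable.fintype_prod hInt
        · refine Filter.Eventually.of_forall fun x => Finset.prod_nonneg fun i _ => ?_
          exact Set.indicator_nonneg (fun y _ => gaussianPDFReal_nonneg 0 1 y) _
    _ = ENNReal.ofReal (∏ i, ∫ y : ℝ, (s i).indicator (gaussianPDFReal 0 1) y) := by
        rw [integral_fintype_prod_volume_eq_prod]
    _ = ∏ i, gaussianReal 0 1 (s i) := by
        rw [ENNReal.ofReal_prod_of_nonneg]
        · refine Finset.prod_congr rfl fun i _ => ?_
          rw [integral_indicator (hs i),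
            gaussianReal_apply_eq_integral 0 (by norm_num) (s i)]
        · intro i _
          refine integral_nonneg fun y => ?_
          exact Set.indicator_nonneg (fun y _ => gaussianPDFReal_nonneg 0 1 y) _

lemma prod_gaussianPDFReal_eq {m : ℕ} {x y : Fin m → ℝ}
    (h : ∑ i, x i * x i = ∑ i, y i * y i) :
    ∏ i, gaussianPDFReal 0 1 (x i) = ∏ i, gaussianPDFReal 0 1 (y i) := by
  simp only [gaussianPDFReal]
  rw [Finset.prod_mul_distrib, Finset.prod_mul_distrib, ← Real.exp_sum, ← Real.exp_sum]
  congr 2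
  rw [← Finset.sum_div, ← Finset.sum_div]
  congr 1
  simp only [sub_zero, pow_two, Finset.sum_neg_distrib, neg_inj]
  exact h

lemma stdGaussian_map_orthogonal {m : ℕ} (O : Matrix (Fin m) (Fin m) ℝ)
    (hO : Oᵀ * O = 1) : (stdGaussian m).map O.mulVec = stdGaussian m := by
  classical
  have hOO : O * Oᵀ = 1 := mul_eq_one_comm.mp hO
  have hdet2 : O.det * O.det = 1 := by
    have := congrArg Matrix.det hO
    rwa [Matrix.det_mul, Matrix.det_transpose, Matrix.det_one] at this
  have habs : |O.det| = 1 := by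
    rcases mul_self_eq_one_iff.mp hdet2 with h | h <;> simp [abs, h]
  have hdet : Oᵀ.det ≠ 0 := by
    rw [Matrix.det_transpose]
    intro h0; rw [h0] at hdet2; simp at hdet2
  -- volume is invariant under Oᵀ
  have hvol : Measure.map (Oᵀ.mulVec) (volume : Measure (Fin m → ℝ)) = volume := by
    have := Real.map_matrix_volume_pi_eq_smul_volume_pi hdet
    have hco : ⇑(Matrix.toLin' Oᵀ) = Oᵀ.mulVec := by
      funext x; simp [Matrix.toLin'_apply]
    rw [hco] at this
    rw [this, Matrix.det_transpose, abs_inv, habs]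
    simp
  set F : (Fin m → ℝ) → ℝ≥0∞ := fun x => ENNReal.ofReal (∏ i, gaussianPDFReal 0 1 (x i)) with hF
  have hFmeas : Measurable F := by
    apply Measurable.ennreal_ofReal
    exact Finset.measurable_prod _ fun i _ =>
      (measurable_gaussianPDFReal 0 1).comp (measurable_pi_apply i)
  have hFinv : ∀ x, F (Oᵀ *ᵥ x) = F x := by
    intro x
    have h1 : (x ᵥ* O) ⬝ᵥ (Oᵀ *ᵥ x) = x ⬝ᵥ x := by
      rw [Matrix.dotProduct_mulVec, Matrix.vecMul_vecMul, hOO, Matrix.vecMul_one]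
    have h2 := congrArg (fun v => v ⬝ᵥ (Oᵀ *ᵥ x)) (Matrix.mulVec_transpose O x)
    have hdot : (Oᵀ *ᵥ x) ⬝ᵥ (Oᵀ *ᵥ x) = x ⬝ᵥ x := h2.trans h1
    simp only [hF]
    congr 1
    exact prod_gaussianPDFReal_eq hdot
  rw [stdGaussian_eq_withDensity, ← hF]
  ext s hs
  rw [Measure.map_apply (measurable_mulVec O) hs, withDensity_apply _ ((measurable_mulVec O) hs),
    withDensity_apply _ hs]
  conv_lhs => rw [← hvol]
  rw [setLIntegral_map ((measurable_mulVec O) hs) hFmeas (measurable_mulVec Oᵀ)]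
  have hpre : (Oᵀ.mulVec) ⁻¹' (O.mulVec ⁻¹' s) = s := by
    ext x
    simp only [Set.mem_preimage, Matrix.mulVec_mulVec, hOO, Matrix.one_mulVec]
  rw [hpre]
  exact setLIntegral_congr_fun hs (fun x _ => hFinv x)

lemma stdGaussian_map_castAdd (m k : ℕ) :
    (stdGaussian (m + k)).map (fun x (i : Fin m) => x (Fin.castAdd k i)) = stdGaussian m := by
  have h1 := measurePreserving_piCongrLeft (fun _ : Fin (m+k) => gaussianReal 0 1) finSumFinEquiv
  have h2 := measurePreserving_sumPiEquivProdPi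
    (fun _ : Fin m ⊕ Fin k => gaussianReal 0 1)
  rw [show stdGaussian (m+k) = _ from h1.map_eq.symm]
  rw [Measure.map_map (by exact measurable_pi_lambda _ fun i => measurable_pi_apply _)
    (MeasurableEquiv.measurable _)]
  have hcomp : ((fun x (i : Fin m) => x (Fin.castAdd k i)) ∘
      (MeasurableEquiv.piCongrLeft (fun _ : Fin (m+k) => ℝ) finSumFinEquiv))
      = Prod.fst ∘ (MeasurableEquiv.sumPiEquivProdPi (fun _ : Fin m ⊕ Fin k => ℝ)) := by
    funext y
    funext i
    simp only [Function.comp_apply, MeasurableEquiv.coe_piCongrLeft,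
      MeasurableEquiv.coe_sumPiEquivProdPi, Equiv.sumPiEquivProdPi_apply]
    have : Fin.castAdd k i = finSumFinEquiv (Sum.inl i) := rfl
    rw [this, Equiv.piCongrLeft_apply_apply]
  rw [hcomp, ← Measure.map_map measurable_fst (MeasurableEquiv.measurable _)]
  rw [h2.map_eq, Measure.map_fst_prod]
  simp [_root_.stdGaussian]

lemma stdGaussian_map_natAdd (m k : ℕ) :
    (stdGaussian (m + k)).map (fun x (i : Fin k) => x (Fin.natAdd m i)) = stdGaussian k := by
  have h1 := measurePreserving_piCongrLeft (fun _ : Fin (m+k) => gaussianReal 0 1) finSumFinEquiv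
  have h2 := measurePreserving_sumPiEquivProdPi
    (fun _ : Fin m ⊕ Fin k => gaussianReal 0 1)
  rw [show stdGaussian (m+k) = _ from h1.map_eq.symm]
  rw [Measure.map_map (by exact measurable_pi_lambda _ fun i => measurable_pi_apply _)
    (MeasurableEquiv.measurable _)]
  have hcomp : ((fun x (i : Fin k) => x (Fin.natAdd m i)) ∘
      (MeasurableEquiv.piCongrLeft (fun _ : Fin (m+k) => ℝ) finSumFinEquiv))
      = Prod.snd ∘ (MeasurableEquiv.sumPiEquivProdPi (fun _ : Fin m ⊕ Fin k => ℝ)) := by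
    funext y
    funext i
    simp only [Function.comp_apply, MeasurableEquiv.coe_piCongrLeft,
      MeasurableEquiv.coe_sumPiEquivProdPi, Equiv.sumPiEquivProdPi_apply]
    have : Fin.natAdd m i = finSumFinEquiv (Sum.inr i) := rfl
    rw [this, Equiv.piCongrLeft_apply_apply]
  rw [hcomp, ← Measure.map_map measurable_snd (MeasurableEquiv.measurable _)]
  rw [h2.map_eq, Measure.map_snd_prod]
  simp [_root_.stdGaussian]

section L5
variable {m k : ℕ}

private noncomputable def euc (v : Fin (m + k) → ℝ) : EuclideanSpace ℝ (Fin (m + k)) :=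
  (WithLp.equiv 2 _).symm v

lemma euc_inner (v w : Fin (m + k) → ℝ) :
    ⟪euc v, euc w⟫ = ∑ i, v i * w i := by
  simp [euc, PiLp.inner_apply, RCLike.inner_apply]
  exact Finset.sum_congr rfl fun _ _ => mul_comm _ _

lemma orthonormal_rows (B : Matrix (Fin k) (Fin (m + k)) ℝ) (hB : B * Bᵀ = 1) :
    Orthonormal ℝ (fun ℓ => euc (B ℓ)) := by
  rw [orthonormal_iff_ite]
  intro i j
  rw [euc_inner]
  have := congrFun (congrFun hB i) j
  simp only [Matrix.mul_apply, Matrix.transpose_apply] at this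
  rw [this]
  by_cases h : i = j <;> simp [h, Matrix.one_apply]

lemma exists_extension_basis (B : Matrix (Fin k) (Fin (m + k)) ℝ) (hB : B * Bᵀ = 1) :
    ∃ b : OrthonormalBasis (Fin k ⊕ Fin m) ℝ (EuclideanSpace ℝ (Fin (m + k))),
      ∀ ℓ : Fin k, b (Sum.inl ℓ) = euc (B ℓ) := by
  classical
  have hcard : Module.finrank ℝ (EuclideanSpace ℝ (Fin (m + k)))
      = Fintype.card (Fin k ⊕ Fin m) := by
    simp [finrank_euclideanSpace]; omega
  set v : Fin k ⊕ Fin m → EuclideanSpace ℝ (Fin (m + k)) :=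
    Sum.elim (fun ℓ => euc (B ℓ)) (fun _ => 0) with hv
  have horth : Orthonormal ℝ ((Set.range (Sum.inl : Fin k → Fin k ⊕ Fin m)).restrict v) := by
    have h0 := orthonormal_rows B hB
    have he : (Set.range (Sum.inl : Fin k → Fin k ⊕ Fin m)).restrict v
        = (fun ℓ => euc (B ℓ)) ∘ ((Equiv.ofInjective _ (Sum.inl_injective)).symm) := by
      funext ⟨x, hx⟩
      obtain ⟨a, rfl⟩ := hx
      simp only [Set.restrict_apply, hv, Sum.elim_inl, Function.comp_apply,
        Equiv.ofInjective_symm_apply]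
      rfl
    rw [he]
    exact h0.comp _ (Equiv.injective _)
  obtain ⟨b, hb⟩ := horth.exists_orthonormalBasis_extension_of_card_eq hcard
  exact ⟨b, fun ℓ => hb (Sum.inl ℓ) ⟨ℓ, rfl⟩⟩

lemma exists_orthogonal_factor (B E : Matrix (Fin k) (Fin (m + k)) ℝ)
    (hB : B * Bᵀ = 1) (hE : E * Eᵀ = 1) :
    ∃ O : Matrix (Fin (m + k)) (Fin (m + k)) ℝ, Oᵀ * O = 1 ∧ B = E * O := by
  classical
  obtain ⟨bB, hbB⟩ := exists_extension_basis B hB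
  obtain ⟨bE, hbE⟩ := exists_extension_basis E hE
  set f := bB.repr.trans bE.repr.symm with hf
  have hmap : ∀ ℓ, f (euc (B ℓ)) = euc (E ℓ) := by
    intro ℓ
    rw [← hbB ℓ, ← hbE ℓ]
    simp [hf, OrthonormalBasis.repr_self, OrthonormalBasis.repr_symm_single]
  set O : Matrix (Fin (m + k)) (Fin (m + k)) ℝ :=
    Matrix.of (fun i j => (WithLp.equiv 2 _) (f (euc (Pi.single j 1))) i) with hO
  have hOcoord : ∀ i j, O i j = (WithLp.equiv 2 _) (f (euc (Pi.single j 1))) i := fun i j => rfl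
  have hinner_sing : ∀ (u : EuclideanSpace ℝ (Fin (m + k))) (j : Fin (m + k)),
      ⟪u, f (euc (Pi.single j 1))⟫ = ∑ l, (WithLp.equiv 2 _) u l * O l j := by
    intro u j
    simp [PiLp.inner_apply, RCLike.inner_apply, hOcoord]
    exact Finset.sum_congr rfl fun _ _ => mul_comm _ _
  refine ⟨O, ?_, ?_⟩
  · ext i j
    have : (Oᵀ * O) i j = ⟪f (euc (Pi.single i 1)), f (euc (Pi.single j 1))⟫ := by
      rw [hinner_sing]
      simp [Matrix.mul_apply, Matrix.transpose_apply, hOcoord]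
    rw [this, f.inner_map_map, euc_inner]
    by_cases h : i = j
    · simp [h, Pi.single_apply, Matrix.one_apply]
    · simp [h, Pi.single_apply, Matrix.one_apply, Ne.symm h]
  · ext ℓ j
    have h1 : (E * O) ℓ j = ⟪euc (E ℓ), f (euc (Pi.single j 1))⟫ := by
      rw [hinner_sing]
      simp [Matrix.mul_apply, euc, WithLp.equiv_apply, WithLp.equiv_symm_apply]
    rw [h1, ← hmap ℓ, f.inner_map_map, euc_inner]
    simp [Pi.single_apply]

end L5

lemma diag_nonneg {m k : ℕ} {A : Matrix (Fin k) (Fin m) ℝ} {d : Fin k → ℝ}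
    (hA : A * Aᵀ = Matrix.diagonal d) (ℓ : Fin k) : 0 ≤ d ℓ := by
  have h := congrFun (congrFun hA ℓ) ℓ
  simp only [Matrix.diagonal_apply_eq, Matrix.mul_apply, Matrix.transpose_apply] at h
  rw [← h]
  exact Finset.sum_nonneg fun x _ => mul_self_nonneg _

lemma row_eq_zero {m k : ℕ} {A : Matrix (Fin k) (Fin m) ℝ} {d : Fin k → ℝ}
    (hA : A * Aᵀ = Matrix.diagonal d) {ℓ : Fin k} (hd : d ℓ = 0) (j : Fin m) : A ℓ j = 0 := by
  have h := congrFun (congrFun hA ℓ) ℓ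
  simp only [Matrix.diagonal_apply_eq, Matrix.mul_apply, Matrix.transpose_apply, hd] at h
  have h2 := (Finset.sum_eq_zero_iff_of_nonneg (fun x _ => mul_self_nonneg (A ℓ x))).1 h
  have := h2 j (Finset.mem_univ j)
  nlinarith [this]

lemma key_map {m k : ℕ} (A : Matrix (Fin k) (Fin m) ℝ) (d : Fin k → ℝ)
    (hA : A * Aᵀ = Matrix.diagonal d) :
    (stdGaussian m).map A.mulVec
      = (stdGaussian k).map (Matrix.diagonal (fun ℓ => Real.sqrt (d ℓ))).mulVec := by
  classical
  have hd0 : ∀ ℓ, 0 ≤ d ℓ := diag_nonneg hA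
  have hKinj : Function.Injective (Fin.natAdd m : Fin k → Fin (m + k)) := by
    intro a b h
    have := congrArg Fin.val h
    simp only [Fin.coe_natAdd] at this
    exact Fin.ext (by omega)
  have hsplit : ∀ g : Fin (m + k) → ℝ,
      ∑ i, g i = ∑ j : Fin m, g (Fin.castAdd k j) + ∑ ℓ : Fin k, g (Fin.natAdd m ℓ) := by
    intro g
    rw [← finSumFinEquiv.sum_comp g, Fintype.sum_sum_type]
    simp [finSumFinEquiv_apply_left, finSumFinEquiv_apply_right]
  set Bh : Matrix (Fin k) (Fin (m + k)) ℝ := Matrix.of fun ℓ i =>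
    if d ℓ = 0 then (if i = Fin.natAdd m ℓ then 1 else 0)
    else (Real.sqrt (d ℓ))⁻¹ * Sum.elim (A ℓ) (fun _ => (0:ℝ)) (finSumFinEquiv.symm i)
    with hBh
  set Eh : Matrix (Fin k) (Fin (m + k)) ℝ :=
    Matrix.of fun ℓ i => if i = Fin.natAdd m ℓ then 1 else 0 with hEh
  have hBcast : ∀ ℓ j, Bh ℓ (Fin.castAdd k j)
      = if d ℓ = 0 then 0 else (Real.sqrt (d ℓ))⁻¹ * A ℓ j := by
    intro ℓ j
    by_cases h : d ℓ = 0
    · have : Fin.castAdd k j ≠ Fin.natAdd m ℓ := by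
        intro hc
        have := congrArg Fin.val hc
        simp only [Fin.coe_castAdd, Fin.coe_natAdd] at this
        omega
      simp [hBh, h, this]
    · simp [hBh, h, finSumFinEquiv_symm_apply_castAdd]
  have hBnat : ∀ ℓ ℓ', Bh ℓ (Fin.natAdd m ℓ')
      = if d ℓ = 0 then (if ℓ' = ℓ then 1 else 0) else 0 := by
    intro ℓ ℓ'
    by_cases h : d ℓ = 0
    · simp only [hBh, Matrix.of_apply, h, if_true]
      by_cases h2 : ℓ' = ℓ
      · simp [h2]
      · have hne : Fin.natAdd m ℓ' ≠ Fin.natAdd m ℓ := fun hc => h2 (hKinj hc)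
        simp [h2, hne]
    · simp [hBh, h, finSumFinEquiv_symm_apply_natAdd]
  -- orthonormality of rows of Bh
  have hBB : Bh * Bhᵀ = 1 := by
    ext ℓ ℓ'
    simp only [Matrix.mul_apply, Matrix.transpose_apply]
    rw [hsplit]
    by_cases h : d ℓ = 0 <;> by_cases h' : d ℓ' = 0
    · -- both zero rows
      simp only [hBcast, hBnat, h, h', if_true, mul_zero, zero_mul, if_pos]
      by_cases he : ℓ = ℓ'
      · simp [he, Matrix.one_apply]
      · rw [Finset.sum_eq_zero, Finset.sum_eq_zero]
        · simp [Matrix.one_apply, he]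
        · intro x _
          by_cases h1 : x = ℓ <;> by_cases h2 : x = ℓ' <;>
            simp_all
        · intro x _; simp
    · have hne : ℓ ≠ ℓ' := fun hc => h' (hc ▸ h)
      rw [Finset.sum_eq_zero, Finset.sum_eq_zero]
      · simp [Matrix.one_apply, hne]
      · intro x _
        rw [hBnat, hBnat]
        simp [h, h']
      · intro j _
        rw [hBcast, hBcast]
        simp [h, h']
    · have hne : ℓ ≠ ℓ' := fun hc => h (hc ▸ h')
      rw [Finset.sum_eq_zero, Finset.sum_eq_zero]
      · simp [Matrix.one_apply, hne]
      · intro x _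
        rw [hBnat, hBnat]
        simp [h, h']
      · intro j _
        rw [hBcast, hBcast]
        simp [h, h']
    · -- both nonzero
      have hAA := congrFun (congrFun hA ℓ) ℓ'
      simp only [Matrix.mul_apply, Matrix.transpose_apply] at hAA
      have hsum2 : ∑ ℓ'' : Fin k, Bh ℓ (Fin.natAdd m ℓ'') * Bh ℓ' (Fin.natAdd m ℓ'') = 0 := by
        apply Finset.sum_eq_zero; intro x _; rw [hBnat]; simp [h]
      rw [hsum2, add_zero]
      have : ∀ j, Bh ℓ (Fin.castAdd k j) * Bh ℓ' (Fin.castAdd k j)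
          = ((Real.sqrt (d ℓ))⁻¹ * (Real.sqrt (d ℓ'))⁻¹) * (A ℓ j * A ℓ' j) := by
        intro j; rw [hBcast, hBcast]; simp [h, h']; ring
      rw [Finset.sum_congr rfl (fun j _ => this j), ← Finset.mul_sum, hAA]
      by_cases he : ℓ = ℓ'
      · subst he
        simp only [Matrix.diagonal_apply_eq, Matrix.one_apply_eq]
        have hs : Real.sqrt (d ℓ) ≠ 0 :=
          Real.sqrt_ne_zero'.mpr (lt_of_le_of_ne (hd0 ℓ) (Ne.symm h))
        have hss := Real.mul_self_sqrt (hd0 ℓ)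
        field_simp
        linarith [hss]
      · simp [Matrix.diagonal_apply_ne _ he, Matrix.one_apply, he]
  have hEE : Eh * Ehᵀ = 1 := by
    ext ℓ ℓ'
    simp only [Matrix.mul_apply, Matrix.transpose_apply, hEh, Matrix.of_apply]
    rw [hsplit]
    have h1 : ∀ j : Fin m, ((if Fin.castAdd k j = Fin.natAdd m ℓ then (1:ℝ) else 0) *
        (if Fin.castAdd k j = Fin.natAdd m ℓ' then 1 else 0)) = 0 := by
      intro j
      have : Fin.castAdd k j ≠ Fin.natAdd m ℓ := by
        intro hc
        have := congrArg Fin.val hc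
        simp only [Fin.coe_castAdd, Fin.coe_natAdd] at this
        omega
      simp [this]
    rw [Finset.sum_congr rfl (fun j _ => h1 j), Finset.sum_const, smul_zero, zero_add]
    by_cases he : ℓ = ℓ'
    · subst he
      rw [Finset.sum_eq_single ℓ]
      · simp [Matrix.one_apply]
      · intro x _ hx
        have hne : Fin.natAdd m x ≠ Fin.natAdd m ℓ := fun hc => hx (hKinj hc)
        simp [hne]
      · simp
    · rw [Finset.sum_eq_zero]
      · simp [Matrix.one_apply, he]
      · intro x _
        by_cases h1 : x = ℓ <;> by_cases h2 : x = ℓ' <;> simp_all [hKinj.eq_iff]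
  obtain ⟨O, hO, hBEO⟩ := exists_orthogonal_factor Bh Eh hBB hEE
  set D : Matrix (Fin k) (Fin k) ℝ := Matrix.diagonal (fun ℓ => Real.sqrt (d ℓ)) with hD
  have hDBh : (fun x : Fin (m+k) → ℝ => D.mulVec (Bh.mulVec x))
      = (fun x => A.mulVec (fun j => x (Fin.castAdd k j))) := by
    funext x
    funext ℓ
    rw [Matrix.mulVec_diagonal]
    show Real.sqrt (d ℓ) * (∑ i, Bh ℓ i * x i) = ∑ j, A ℓ j * x (Fin.castAdd k j)
    rw [hsplit (fun i => Bh ℓ i * x i)]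
    by_cases h : d ℓ = 0
    · have hz : Real.sqrt (d ℓ) = 0 := by rw [h, Real.sqrt_zero]
      rw [hz, zero_mul, eq_comm]
      apply Finset.sum_eq_zero
      intro j _
      rw [row_eq_zero hA h j, zero_mul]
    · have hsum2 : ∑ ℓ'' : Fin k, Bh ℓ (Fin.natAdd m ℓ'') * x (Fin.natAdd m ℓ'') = 0 := by
        apply Finset.sum_eq_zero; intro ℓ'' _; rw [hBnat]; simp [h]
      rw [hsum2, add_zero, Finset.mul_sum]
      apply Finset.sum_congr rfl
      intro j _
      rw [hBcast]
      simp only [h, if_false]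
      have hs : Real.sqrt (d ℓ) ≠ 0 :=
        Real.sqrt_ne_zero'.mpr (lt_of_le_of_ne (hd0 ℓ) (Ne.symm h))
      field_simp
  have hEproj : (Eh.mulVec : (Fin (m+k) → ℝ) → (Fin k → ℝ))
      = (fun x (ℓ : Fin k) => x (Fin.natAdd m ℓ)) := by
    funext x ℓ
    show ∑ i, Eh ℓ i * x i = x (Fin.natAdd m ℓ)
    rw [Finset.sum_eq_single (Fin.natAdd m ℓ)]
    · simp [hEh]
    · intro i _ hi
      simp [hEh, hi]
    · simp
  have hmeasJ : Measurable (fun x : Fin (m+k) → ℝ => (fun j : Fin m => x (Fin.castAdd k j))) :=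
    measurable_pi_lambda _ fun j => measurable_pi_apply _
  have hmeasK : Measurable (fun x : Fin (m+k) → ℝ => (fun ℓ : Fin k => x (Fin.natAdd m ℓ))) :=
    measurable_pi_lambda _ fun j => measurable_pi_apply _
  calc (stdGaussian m).map A.mulVec
      = ((stdGaussian (m+k)).map (fun x (j : Fin m) => x (Fin.castAdd k j))).map A.mulVec := by
        rw [stdGaussian_map_castAdd]
    _ = (stdGaussian (m+k)).map (fun x => A.mulVec (fun j => x (Fin.castAdd k j))) := by
        rw [Measure.map_map (measurable_mulVec A) hmeasJ]; rfl
    _ = (stdGaussian (m+k)).map (fun x => D.mulVec (Bh.mulVec x)) := by rw [hDBh]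
    _ = ((stdGaussian (m+k)).map Bh.mulVec).map D.mulVec := by
        rw [Measure.map_map (measurable_mulVec D) (measurable_mulVec Bh)]; rfl
    _ = ((stdGaussian (m+k)).map (fun x => Eh.mulVec (O.mulVec x))).map D.mulVec := by
        have : Bh.mulVec = fun x => Eh.mulVec (O.mulVec x) := by
          funext x
          rw [Matrix.mulVec_mulVec, ← hBEO]
        rw [this]
    _ = (((stdGaussian (m+k)).map O.mulVec).map Eh.mulVec).map D.mulVec := by
        rw [Measure.map_map (measurable_mulVec Eh) (measurable_mulVec O)]; rfl
    _ = ((stdGaussian (m+k)).map Eh.mulVec).map D.mulVec := by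
        rw [stdGaussian_map_orthogonal O hO]
    _ = (stdGaussian k).map D.mulVec := by
        rw [hEproj, stdGaussian_map_natAdd]

end AuxLemmas

lemma dot_sq_eq {a b : ℕ} (C : Matrix (Fin a) (Fin b) ℝ) (hC : Cᵀ * C = 1)
    (w : Fin b → ℝ) : (C *ᵥ w) ⬝ᵥ (C *ᵥ w) = w ⬝ᵥ w := by
  have h0 : C *ᵥ w = w ᵥ* Cᵀ := by rw [← Matrix.transpose_transpose C, Matrix.mulVec_transpose,
    Matrix.transpose_transpose]
  have h1 : (w ᵥ* Cᵀ) ⬝ᵥ (C *ᵥ w) = w ⬝ᵥ w := by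
    rw [Matrix.dotProduct_mulVec, Matrix.vecMul_vecMul, hC, Matrix.vecMul_one]
  rw [← h1]
  exact congrArg (fun v => v ⬝ᵥ (C *ᵥ w)) h0

lemma conjT_eq_transpose {a b : ℕ} (C : Matrix (Fin a) (Fin b) ℝ) : Cᴴ = Cᵀ := by
  ext i j; simp [Matrix.conjTranspose_apply]

lemma sq_conj {a : ℕ} (W D E : Matrix (Fin a) (Fin a) ℝ) (hWW : E * W = 1) :
    (W * D * E) * (W * D * E) = W * (D * D) * E := by
  simp only [Matrix.mul_assoc]; rw [← Matrix.mul_assoc E W, hWW, Matrix.one_mul]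

lemma measurable_dot_self {a : ℕ} : Measurable (fun z : Fin a → ℝ => z ⬝ᵥ z) := by
  unfold dotProduct
  exact Finset.measurable_sum _ fun i _ =>
    (measurable_pi_apply i).mul (measurable_pi_apply i)

/-- Under the null with `V = Sg + τ₀* B Bᵀ` positive definite, the probability under
`Y ~ N(0, V)` that the score is nonnegative equals the probability that the weighted
chi-square `∑ λ_ℓ x_ℓ²` exceeds its mean `∑ λ_ℓ`, where `λ_ℓ` are the eigenvalues of
`Zᵀ V⁻¹ Z / n` and `x ~ N(0, I_{k₁})`. -/
theorem stmt5 (n k0 k1 N : ℕ) (hn : 0 < n) (hk0 : 0 < k0) (hk1 : 0 < k1) (hN : 0 < N)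
    (B : Matrix (Fin N) (Fin k0) ℝ) (Z : Matrix (Fin N) (Fin k1) ℝ)
    (Sg : Matrix (Fin N) (Fin N) ℝ) (hSg : Sg.PosDef)
    (τ0 : ℝ) (hτ0 : 0 ≤ τ0)
    (V : Matrix (Fin N) (Fin N) ℝ) (hVdef : V = Sg + τ0 • (B * Bᵀ)) (hV : V.PosDef)
    (hM : ((n : ℝ)⁻¹ • (Zᵀ * V⁻¹ * Z)).IsHermitian)
    (S : (Fin N → ℝ) → ℝ)
    (hS : ∀ y, S y = -(1 / 2) * ((Zᵀ * V⁻¹ * Z).trace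
      - y ⬝ᵥ (V⁻¹ * Z * Zᵀ * V⁻¹).mulVec y)) :
    gaussian V {y | 0 ≤ S y} =
      stdGaussian k1 {x | ∑ ℓ, hM.eigenvalues ℓ ≤ ∑ ℓ, hM.eigenvalues ℓ * x ℓ ^ 2} := by
  classical
  have hn0 : (n:ℝ) ≠ 0 := Nat.cast_ne_zero.mpr hn.ne'
  have hnpos : (0:ℝ) < n := Nat.cast_pos.mpr hn
  set t : ℝ := (Zᵀ * V⁻¹ * Z).trace with ht
  set lam : Fin k1 → ℝ := hM.eigenvalues with hlam
  -- basic facts on V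
  have hVunit : IsUnit V.det := isUnit_iff_ne_zero.mpr hV.det_pos.ne'
  have hVinv : V⁻¹ * V = 1 := Matrix.nonsing_inv_mul V hVunit
  have hVsym : Vᵀ = V := by
    have := hV.isHermitian
    rwa [Matrix.IsHermitian, conjT_eq_transpose] at this
  have hVisym : V⁻¹ᵀ = V⁻¹ := by rw [Matrix.transpose_nonsing_inv, hVsym]
  set R : Matrix (Fin N) (Fin N) ℝ :=
    (hV.posSemidef.1.eigenvectorUnitary : Matrix (Fin N) (Fin N) ℝ) *
      diagonal (Real.sqrt ∘ hV.posSemidef.1.eigenvalues) *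
      (star hV.posSemidef.1.eigenvectorUnitary : Matrix (Fin N) (Fin N) ℝ) with hR
  have hRsym : Rᵀ = R := by
    rw [hR, Matrix.star_eq_conjTranspose, conjT_eq_transpose,
      Matrix.transpose_mul, Matrix.transpose_mul, Matrix.transpose_transpose,
      Matrix.diagonal_transpose, Matrix.mul_assoc]
  have hRR : R * R = V := by
    have hWW := Unitary.coe_star_mul_self hV.posSemidef.1.eigenvectorUnitary
    have hsp := hV.posSemidef.1.spectral_theorem
    rw [Unitary.conjStarAlgAut_apply] at hsp
    have hDD : diagonal (Real.sqrt ∘ hV.posSemidef.1.eigenvalues) *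
        diagonal (Real.sqrt ∘ hV.posSemidef.1.eigenvalues)
        = diagonal (RCLike.ofReal ∘ hV.posSemidef.1.eigenvalues) := by
      rw [Matrix.diagonal_mul_diagonal]; congr 1; funext i
      simp [Real.mul_self_sqrt (hV.posSemidef.eigenvalues_nonneg i)]
    rw [hR, sq_conj _ _ _ hWW, hDD]
    exact hsp.symm
  -- the matrices A₁ and A₂
  set P : Matrix (Fin k1) (Fin N) ℝ := Zᵀ * V⁻¹ with hP
  have hPt : Pᵀ = V⁻¹ * Z := by rw [hP, Matrix.transpose_mul, hVisym, Matrix.transpose_transpose]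
  set A₁ : Matrix (Fin k1) (Fin N) ℝ := P * R with hA₁
  have hA1 : A₁ * A₁ᵀ = Zᵀ * V⁻¹ * Z := by
    rw [hA₁, Matrix.transpose_mul, hRsym, hPt]
    rw [Matrix.mul_assoc P R (R * (V⁻¹ * Z)), ← Matrix.mul_assoc R R (V⁻¹ * Z), hRR,
      ← Matrix.mul_assoc V V⁻¹ Z, Matrix.mul_nonsing_inv V hVunit, Matrix.one_mul, hP,
      Matrix.mul_assoc]
  set U : Matrix (Fin k1) (Fin k1) ℝ := (hM.eigenvectorUnitary : Matrix (Fin k1) (Fin k1) ℝ)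
    with hU
  have hUstar : star U = Uᵀ := conjT_eq_transpose U
  have hUU : Uᵀ * U = 1 := by
    rw [← hUstar]
    exact Unitary.coe_star_mul_self hM.eigenvectorUnitary
  have hUUT : U * Uᵀ = 1 := mul_eq_one_comm.mp hUU
  have hspec : Uᵀ * ((n : ℝ)⁻¹ • (Zᵀ * V⁻¹ * Z)) * U = Matrix.diagonal lam := by
    rw [← hUstar]
    have := hM.conjStarAlgAut_star_eigenvectorUnitary
    rw [Unitary.conjStarAlgAut_star_apply] at this
    exact this
  have hspec2 : Uᵀ * (Zᵀ * V⁻¹ * Z) * U = Matrix.diagonal (fun ℓ => (n:ℝ) * lam ℓ) := by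
    have h1 : (Zᵀ * V⁻¹ * Z) = (n:ℝ) • ((n : ℝ)⁻¹ • (Zᵀ * V⁻¹ * Z)) := by
      rw [smul_smul, mul_inv_cancel₀ hn0, one_smul]
    rw [h1, Matrix.mul_smul, Matrix.smul_mul, hspec, ← Matrix.diagonal_smul]
    rfl
  set A₂ : Matrix (Fin k1) (Fin N) ℝ := Uᵀ * A₁ with hA₂
  have hA2 : A₂ * A₂ᵀ = Matrix.diagonal (fun ℓ => (n:ℝ) * lam ℓ) := by
    rw [hA₂, Matrix.transpose_mul, Matrix.transpose_transpose, ← hspec2,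
      Matrix.mul_assoc Uᵀ A₁ (A₁ᵀ * U), ← Matrix.mul_assoc A₁ A₁ᵀ U, hA1,
      Matrix.mul_assoc Uᵀ (Zᵀ * V⁻¹ * Z) U]
  have hA1A2 : A₁ = U * A₂ := by rw [hA₂, ← Matrix.mul_assoc, hUUT, Matrix.one_mul]
  have hd0 : ∀ ℓ, 0 ≤ (n:ℝ) * lam ℓ := diag_nonneg hA2
  -- trace
  have htr : t = ∑ ℓ, (n:ℝ) * lam ℓ := by
    have h1 : (Uᵀ * (Zᵀ * V⁻¹ * Z) * U).trace = (Zᵀ * V⁻¹ * Z).trace := by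
      rw [Matrix.trace_mul_cycle, hUUT, Matrix.one_mul]
    rw [ht, ← h1, hspec2, Matrix.trace_diagonal]
  -- measurability of S and sets
  have hSfun : S = fun y => -(1 / 2) * (t - y ⬝ᵥ (V⁻¹ * Z * Zᵀ * V⁻¹).mulVec y) := by
    funext y; rw [hS y]
  have hQmeas : Measurable (fun y : Fin N → ℝ => y ⬝ᵥ (V⁻¹ * Z * Zᵀ * V⁻¹).mulVec y) := by
    unfold dotProduct
    exact Finset.measurable_sum _ fun i _ =>
      (measurable_pi_apply i).mul
        ((measurable_pi_apply i).comp (measurable_mulVec (V⁻¹ * Z * Zᵀ * V⁻¹)))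
  have hSmeas : Measurable S := by
    rw [hSfun]
    exact (measurable_const.sub hQmeas).const_mul _
  have hsetS : MeasurableSet {y : Fin N → ℝ | 0 ≤ S y} :=
    measurableSet_le measurable_const hSmeas
  set T : Set (Fin k1 → ℝ) := {z | t ≤ z ⬝ᵥ z} with hT
  have hTmeas : MeasurableSet T := measurableSet_le measurable_const measurable_dot_self
  -- quadratic form identity
  have hQ : ∀ x : Fin N → ℝ, (R *ᵥ x) ⬝ᵥ (V⁻¹ * Z * Zᵀ * V⁻¹).mulVec (R *ᵥ x)
      = (A₂ *ᵥ x) ⬝ᵥ (A₂ *ᵥ x) := by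
    intro x
    have hW : V⁻¹ * Z * Zᵀ * V⁻¹ = Pᵀ * P := by
      rw [hPt, hP, Matrix.mul_assoc (V⁻¹ * Z) Zᵀ V⁻¹]
    rw [hW]
    set y := R *ᵥ x with hy
    have h1 : y ⬝ᵥ (Pᵀ * P) *ᵥ y = (P *ᵥ y) ⬝ᵥ (P *ᵥ y) := by
      rw [← Matrix.mulVec_mulVec, Matrix.dotProduct_mulVec, Matrix.vecMul_transpose]
    rw [h1, hy, Matrix.mulVec_mulVec, ← hA₁, hA1A2]
    have h2 : (U * A₂) *ᵥ x = U *ᵥ (A₂ *ᵥ x) := (Matrix.mulVec_mulVec x U A₂).symm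
    rw [h2]
    exact dot_sq_eq U hUU (A₂ *ᵥ x)
  -- pointwise description of the event
  have hpre : R.mulVec ⁻¹' {y | 0 ≤ S y} = A₂.mulVec ⁻¹' T := by
    ext x
    simp only [Set.mem_preimage, Set.mem_setOf_eq, hT, hSfun]
    rw [hQ x]
    constructor
    · intro h; linarith
    · intro h; linarith
  -- compute
  have hgauss : gaussian V = (stdGaussian N).map R.mulVec := by
    unfold gaussian
    rw [dif_pos hV.posSemidef]
  rw [hgauss, Measure.map_apply (measurable_mulVec R) hsetS, hpre,
    ← Measure.map_apply (measurable_mulVec A₂) hTmeas,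
    key_map A₂ (fun ℓ => (n:ℝ) * lam ℓ) hA2,
    Measure.map_apply (measurable_mulVec _) hTmeas]
  congr 1
  ext x
  simp only [Set.mem_preimage, hT, Set.mem_setOf_eq]
  have hdot : (Matrix.diagonal (fun ℓ => Real.sqrt ((n:ℝ) * lam ℓ)) *ᵥ x)
      ⬝ᵥ (Matrix.diagonal (fun ℓ => Real.sqrt ((n:ℝ) * lam ℓ)) *ᵥ x)
      = ∑ ℓ, (n:ℝ) * lam ℓ * (x ℓ)^2 := by
    unfold dotProduct
    apply Finset.sum_congr rfl
    intro ℓ _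
    rw [Matrix.mulVec_diagonal]
    calc Real.sqrt ((n:ℝ) * lam ℓ) * x ℓ * (Real.sqrt ((n:ℝ) * lam ℓ) * x ℓ)
        = (Real.sqrt ((n:ℝ) * lam ℓ) * Real.sqrt ((n:ℝ) * lam ℓ)) * (x ℓ * x ℓ) := by ring
      _ = (n:ℝ) * lam ℓ * (x ℓ)^2 := by rw [Real.mul_self_sqrt (hd0 ℓ), pow_two]
  rw [hdot, htr]
  have hsum : ∑ ℓ, (n:ℝ) * lam ℓ * (x ℓ)^2 = (n:ℝ) * ∑ ℓ, lam ℓ * (x ℓ)^2 := by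
    rw [Finset.mul_sum]; apply Finset.sum_congr rfl; intro ℓ _; ring
  have hsum2 : ∑ ℓ, (n:ℝ) * lam ℓ = (n:ℝ) * ∑ ℓ, lam ℓ := by
    rw [Finset.mul_sum]
  rw [hsum, hsum2]
  exact (mul_le_mul_iff_right₀ hnpos)
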